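/- Let M be an n×n Hermitian matrix with spectral decomposition M = g·Diag(ν)·g⁻¹, ν₁ ≥ ... ≥ νₙ, g unitary, and let M_T = A*MA be its tridiagonalization via the cyclic subspace of e₁. Then the eigenvalues of M_T are distinct, and the set of eigenvalues of M_T equals {ν_i : 1 ≤ i ≤ n and g_{1,i} ≠ 0}. -/

import Mathlib

open Matrix BigOperators

noncomputable section

/-- The Gram–Schmidt orthonormalization of the Krylov vectors
`e₁, M e₁, M² e₁, ...` of a matrix `M`, as vectors in `EuclideanSpace ℂ (Fin (n+1))`. -/
def krylovGS {n : ℕ} (M : Matrix (Fin (n + 1)) (Fin (n + 1)) ℂ) (m : ℕ) (j : Fin m) :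
    EuclideanSpace ℂ (Fin (n + 1)) :=
  @InnerProductSpace.gramSchmidtNormed ℂ (EuclideanSpace ℂ (Fin (n + 1))) _ _ _ (Fin m) _
    (inferInstance : LocallyFiniteOrderBot (Fin m))
    (inferInstance : WellFoundedLT (Fin m))
    (fun l : Fin m =>
      (WithLp.equiv 2 (Fin (n + 1) → ℂ)).symm ((M ^ (l : ℕ)).mulVec (Pi.single 0 1))) j

theorem spec_iff_eig {k : ℕ} (T : Matrix (Fin k) (Fin k) ℂ) (x : ℂ) :
    x ∈ spectrum ℂ T ↔ ∃ v : Fin k → ℂ, v ≠ 0 ∧ T.mulVec v = x • v := by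
  rw [spectrum.mem_iff]
  have h1 : IsUnit (algebraMap ℂ (Matrix (Fin k) (Fin k) ℂ) x - T) ↔
      ((algebraMap ℂ (Matrix (Fin k) (Fin k) ℂ) x - T)).det ≠ 0 := by
    rw [Matrix.isUnit_iff_isUnit_det, isUnit_iff_ne_zero]
  rw [h1, not_not, ← Matrix.exists_mulVec_eq_zero_iff]
  constructor
  · rintro ⟨v, hv, h⟩
    refine ⟨v, hv, ?_⟩
    have h0 : (algebraMap ℂ (Matrix (Fin k) (Fin k) ℂ) x).mulVec v - T.mulVec v = 0 := by
      rw [← Matrix.sub_mulVec]; exact h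
    have h2 : (algebraMap ℂ (Matrix (Fin k) (Fin k) ℂ) x).mulVec v = x • v := by
      rw [Algebra.algebraMap_eq_smul_one, Matrix.smul_mulVec, Matrix.one_mulVec]
    rw [h2] at h0
    rw [eq_comm, ← sub_eq_zero]
    simpa using h0
  · rintro ⟨v, hv, h⟩
    refine ⟨v, hv, ?_⟩
    rw [Matrix.sub_mulVec, Algebra.algebraMap_eq_smul_one, Matrix.smul_mulVec,
      Matrix.one_mulVec, h, sub_self]

def suppSubmodule {N : ℕ} (c : Fin N → ℂ) : Submodule ℂ (Fin N → ℂ) where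
  carrier := {u | ∀ i, c i = 0 → u i = 0}
  add_mem' := fun ha hb i hi => by simp [ha i hi, hb i hi]
  zero_mem' := fun i _ => rfl
  smul_mem' := fun a u hu i hi => by simp [hu i hi]


/-- for a Hermitian matrix `M = g Diag(ν) g⁻¹` (`ν` weakly decreasing, `g`
unitary) with tridiagonalization `M_T = A* M A` via the cyclic subspace of `e₁`, the
eigenvalues of `M_T` are distinct (there are `m` of them, where `M_T` is `m × m`), and the
set of eigenvalues of `M_T` is `{ν_i : g_{1,i} ≠ 0}`. -/
theorem stmt8 {n : ℕ} (M : Matrix (Fin (n + 1)) (Fin (n + 1)) ℂ) (hM : M.IsHermitian)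
    (g : Matrix (Fin (n + 1)) (Fin (n + 1)) ℂ)
    (hg : g ∈ Matrix.unitaryGroup (Fin (n + 1)) ℂ)
    (ν : Fin (n + 1) → ℝ) (hν : Antitone ν)
    (hspec : M = g * Matrix.diagonal (fun i => (ν i : ℂ)) * g⁻¹)
    (m : ℕ)
    (hm : m = Module.finrank ℂ
      (Submodule.span ℂ (Set.range fun j : ℕ => (M ^ j).mulVec (Pi.single 0 1))))
    (A : Matrix (Fin (n + 1)) (Fin m) ℂ)
    (hA : ∀ i j, A i j = (WithLp.equiv 2 (Fin (n + 1) → ℂ)) (krylovGS M m j) i) :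
    spectrum ℂ (Aᴴ * M * A) = {x : ℂ | ∃ i : Fin (n + 1), g 0 i ≠ 0 ∧ x = (ν i : ℂ)} ∧
    (spectrum ℂ (Aᴴ * M * A)).ncard = m := by
  classical
  set D : Matrix (Fin (n + 1)) (Fin (n + 1)) ℂ := Matrix.diagonal (fun i => (ν i : ℂ)) with hD
  have hstar : star g * g = 1 := hg.1
  have hInv : Invertible g := invertibleOfLeftInverse _ _ hstar
  have hginv : g⁻¹ = star g := Matrix.inv_eq_left_inv hstar
  have hg'g : g⁻¹ * g = 1 := by rw [hginv]; exact hstar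
  have hgg' : g * g⁻¹ = 1 := by rw [hginv]; exact hg.2
  set c : Fin (n + 1) → ℂ := fun i => star (g 0 i) with hcdef
  have hc : (g⁻¹).mulVec (Pi.single 0 1) = c := by
    rw [hginv]
    funext i
    simp [Matrix.mulVec_single, Matrix.star_apply, hcdef]
  have hMpow : ∀ j : ℕ, M ^ j = g * D ^ j * g⁻¹ := by
    intro j
    induction j with
    | zero => simp [hgg']
    | succ k ih =>
      rw [pow_succ, ih, hspec, pow_succ]
      rw [show g * D ^ k * g⁻¹ * (g * D * g⁻¹) = g * D ^ k * (g⁻¹ * g) * D * g⁻¹ by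
        simp only [Matrix.mul_assoc], hg'g]
      simp [Matrix.mul_assoc]
  have hKry : ∀ j : ℕ, (M ^ j).mulVec (Pi.single 0 1) = g.mulVec ((D ^ j).mulVec c) := by
    intro j
    rw [hMpow j, Matrix.mul_assoc, ← Matrix.mulVec_mulVec, ← Matrix.mulVec_mulVec, hc]
  have hDpow : ∀ (j : ℕ) (u : Fin (n + 1) → ℂ) (i : Fin (n + 1)),
      (D ^ j).mulVec u i = (ν i : ℂ) ^ j * u i := by
    intro j u i
    rw [hD, Matrix.diagonal_pow, Matrix.mulVec_diagonal, Pi.pow_apply]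
  -- the distinct eigenvalues supported by e₁
  set Vc : Finset ℂ :=
    (Finset.univ.filter fun i : Fin (n + 1) => g 0 i ≠ 0).image (fun i => (ν i : ℂ)) with hVc
  set wv : ℂ → (Fin (n + 1) → ℂ) := fun l i => if (ν i : ℂ) = l then c i else 0 with hwv
  have hci : ∀ i, c i = 0 ↔ g 0 i = 0 := fun i => star_eq_zero
  have hmemVc : ∀ i, c i ≠ 0 → (ν i : ℂ) ∈ Vc := by
    intro i hi
    exact Finset.mem_image.2 ⟨i, Finset.mem_filter.2 ⟨Finset.mem_univ _,
      fun h => hi ((hci i).2 h)⟩, rfl⟩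
  have F1 : ∀ j : ℕ, (D ^ j).mulVec c = ∑ l ∈ Vc, l ^ j • wv l := by
    intro j
    funext i
    rw [hDpow j c i]
    rw [Finset.sum_apply]
    by_cases hcz : c i = 0
    · simp [hwv, hcz]
    · have hmem := hmemVc i hcz
      calc (ν i : ℂ) ^ j * c i
          = ∑ l ∈ Vc, (if (ν i : ℂ) = l then (ν i : ℂ) ^ j * c i else 0) := by
            rw [Finset.sum_ite_eq Vc ((ν i : ℂ)) (fun _ => (ν i : ℂ) ^ j * c i), if_pos hmem]
        _ = ∑ l ∈ Vc, (l ^ j • wv l) i := by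
            refine Finset.sum_congr rfl fun l hl => ?_
            simp only [Pi.smul_apply, hwv, smul_eq_mul, mul_ite, mul_zero]
            by_cases h : (ν i : ℂ) = l
            · rw [if_pos h, if_pos h, h]
            · rw [if_neg h, if_neg h]
  have F2 : ∀ l ∈ Vc, wv l =
      ∑ j ∈ Finset.range Vc.card,
        (Lagrange.basis Vc id l).coeff j • (D ^ j).mulVec c := by
    intro l hl
    have hVne : Vc.Nonempty := ⟨l, hl⟩
    have hdeg : (Lagrange.basis Vc id l).natDegree < Vc.card := by
      rw [Lagrange.natDegree_basis (Set.injOn_id _) hl]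
      have := Finset.card_pos.2 hVne
      omega
    funext i
    have hrhs : (∑ j ∈ Finset.range Vc.card,
        (Lagrange.basis Vc id l).coeff j • (D ^ j).mulVec c) i
        = (Lagrange.basis Vc id l).eval ((ν i : ℂ)) * c i := by
      rw [Finset.sum_apply, Polynomial.eval_eq_sum_range' hdeg, Finset.sum_mul]
      refine Finset.sum_congr rfl fun j hj => ?_
      rw [Pi.smul_apply, hDpow j c i, smul_eq_mul, mul_assoc]
    rw [hrhs]
    by_cases hcz : c i = 0
    · simp [hwv, hcz]
    · by_cases h : (ν i : ℂ) = l
      · have : (Lagrange.basis Vc id l).eval ((ν i : ℂ)) = 1 := by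
          rw [h]; exact Lagrange.eval_basis_self (Set.injOn_id _) hl
        rw [this, one_mul]
        simp [hwv, h]
      · have : (Lagrange.basis Vc id l).eval ((ν i : ℂ)) = 0 :=
          Lagrange.eval_basis_of_ne (v := id) (fun he => h he.symm) (hmemVc i hcz)
        rw [this, zero_mul]
        simp [hwv, h]
  -- linear independence of the wv family
  have hLIw : LinearIndependent ℂ (fun l : {x // x ∈ Vc} => wv ↑l) := by
    rw [Fintype.linearIndependent_iff]
    intro a hsum l
    obtain ⟨i₀, hi₀, hνi₀⟩ := Finset.mem_image.1 l.2
    have hgi₀ : g 0 i₀ ≠ 0 := (Finset.mem_filter.1 hi₀).2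
    have hci₀ : c i₀ ≠ 0 := fun h => hgi₀ ((hci i₀).1 h)
    have h0 := congrFun hsum i₀
    rw [Finset.sum_apply] at h0
    have hterm : ∀ l' : {x // x ∈ Vc}, l' ∈ Finset.univ → l' ≠ l →
        (a l' • wv ↑l') i₀ = 0 := by
      intro l' _ hne
      have : (ν i₀ : ℂ) ≠ ↑l' := by
        rw [hνi₀]
        exact fun h => hne (Subtype.ext h).symm
      simp [hwv, this]
    rw [Finset.sum_eq_single_of_mem l (Finset.mem_univ l) hterm] at h0
    have : (a l • wv ↑l) i₀ = a l * c i₀ := by simp [hwv, hνi₀]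
    rw [this] at h0
    exact (mul_eq_zero.1 h0).resolve_right hci₀
  -- spans
  set KD : Submodule ℂ (Fin (n + 1) → ℂ) :=
    Submodule.span ℂ (Set.range fun j : ℕ => (D ^ j).mulVec c) with hKD
  set W : Submodule ℂ (Fin (n + 1) → ℂ) :=
    Submodule.span ℂ (Set.range fun l : {x // x ∈ Vc} => wv ↑l) with hW
  have hKDW : KD ≤ W := by
    rw [hKD]
    refine Submodule.span_le.2 ?_
    rintro x ⟨j, rfl⟩
    show (D ^ j).mulVec c ∈ W
    rw [F1 j]
    exact Submodule.sum_mem _ fun l hl => Submodule.smul_mem _ _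
      (Submodule.subset_span ⟨⟨l, hl⟩, rfl⟩)
  have hWfin : ∀ k, Vc.card ≤ k →
      W ≤ Submodule.span ℂ (Set.range fun j : Fin k => (D ^ (j : ℕ)).mulVec c) := by
    intro k hk
    rw [hW]
    refine Submodule.span_le.2 ?_
    rintro x ⟨l, rfl⟩
    show wv ↑l ∈ Submodule.span ℂ (Set.range fun j : Fin k => (D ^ (j : ℕ)).mulVec c)
    rw [F2 ↑l l.2]
    refine Submodule.sum_mem _ fun j hj => Submodule.smul_mem _ _ ?_
    have hjk : j < k := lt_of_lt_of_le (Finset.mem_range.1 hj) hk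
    exact Submodule.subset_span ⟨⟨j, hjk⟩, rfl⟩
  have hfinKD : ∀ k : ℕ,
      Submodule.span ℂ (Set.range fun j : Fin k => (D ^ (j : ℕ)).mulVec c) ≤ KD := by
    intro k
    refine Submodule.span_le.2 ?_
    rintro x ⟨j, rfl⟩
    exact Submodule.subset_span ⟨(j : ℕ), rfl⟩
  have hfin : ∀ k, Vc.card ≤ k →
      Submodule.span ℂ (Set.range fun j : Fin k => (D ^ (j : ℕ)).mulVec c) = KD :=
    fun k hk => le_antisymm (hfinKD k) (hKDW.trans (hWfin k hk))
  have hKDWeq : KD = W :=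
    le_antisymm hKDW ((hWfin Vc.card le_rfl).trans (hfinKD Vc.card))
  have hfinrankKD : Module.finrank ℂ KD = Vc.card := by
    rw [hKDWeq, hW, finrank_span_eq_card hLIw, Fintype.card_coe]
  -- transport through g
  set eg : (Fin (n + 1) → ℂ) ≃ₗ[ℂ] (Fin (n + 1) → ℂ) := g.toLinearEquiv' hInv with heg
  have hegapp : ∀ u, eg u = g.mulVec u := by
    intro u
    show Matrix.toLin' g u = _
    rw [Matrix.toLin'_apply]
  set K : Submodule ℂ (Fin (n + 1) → ℂ) :=
    Submodule.span ℂ (Set.range fun j : ℕ => (M ^ j).mulVec (Pi.single 0 1)) with hK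
  have hr : (fun j : ℕ => (M ^ j).mulVec (Pi.single 0 1))
      = (⇑eg ∘ fun j : ℕ => (D ^ j).mulVec c) := by
    funext j
    simp only [Function.comp]
    rw [hegapp, hKry j]
  have hKmap : K = Submodule.map (eg : (Fin (n + 1) → ℂ) →ₗ[ℂ] (Fin (n + 1) → ℂ)) KD := by
    rw [hK, hKD, Submodule.map_span, ← Set.range_comp, hr]; rfl
  have hmVc : m = Vc.card := by
    rw [hm, hKmap]
    exact (LinearEquiv.finrank_map_eq eg KD).trans hfinrankKD
  -- linear independence of the first m Krylov vectors
  have hVcm : Vc.card ≤ m := le_of_eq hmVc.symm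
  have hLID : LinearIndependent ℂ (fun j : Fin m => (D ^ (j : ℕ)).mulVec c) := by
    rw [linearIndependent_iff_card_eq_finrank_span]
    show Fintype.card (Fin m) = Module.finrank ℂ
      (Submodule.span ℂ (Set.range fun j : Fin m => (D ^ (j : ℕ)).mulVec c))
    rw [Fintype.card_fin, hfin m hVcm, hfinrankKD, hmVc]
  have hLIM : LinearIndependent ℂ
      (fun j : Fin m => (M ^ (j : ℕ)).mulVec (Pi.single 0 1 : Fin (n + 1) → ℂ)) := by
    have h := hLID.map' eg.toLinearMap (LinearMap.ker_eq_bot.2 eg.injective)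
    have he : (⇑eg.toLinearMap ∘ fun j : Fin m => (D ^ (j : ℕ)).mulVec c)
        = fun j : Fin m => (M ^ (j : ℕ)).mulVec (Pi.single 0 1) := by
      funext j
      simp only [Function.comp, LinearEquiv.coe_coe]
      rw [hegapp, hKry]
    rwa [he] at h
  set ew : WithLp 2 (Fin (n + 1) → ℂ) ≃ₗ[ℂ] (Fin (n + 1) → ℂ) :=
    WithLp.linearEquiv 2 ℂ (Fin (n + 1) → ℂ) with hew
  set F : Fin m → EuclideanSpace ℂ (Fin (n + 1)) := fun j =>
    (WithLp.equiv 2 (Fin (n + 1) → ℂ)).symm ((M ^ (j : ℕ)).mulVec (Pi.single 0 1)) with hF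
  have hLIF : LinearIndependent ℂ F := by
    have h := hLIM.map' ew.symm.toLinearMap (LinearMap.ker_eq_bot.2 ew.symm.injective)
    have he : (⇑ew.symm.toLinearMap ∘
        fun j : Fin m => (M ^ (j : ℕ)).mulVec (Pi.single 0 1)) = F := rfl
    rwa [he] at h
  have horth : Orthonormal ℂ (krylovGS M m) := by
    unfold krylovGS
    exact @InnerProductSpace.gramSchmidtNormed_orthonormal ℂ (EuclideanSpace ℂ (Fin (n + 1))) _ _ _ (Fin m) _
      (inferInstance : LocallyFiniteOrderBot (Fin m))
      (inferInstance : WellFoundedLT (Fin m)) F hLIF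
  -- A has orthonormal columns
  have hAtA : Aᴴ * A = 1 := by
    ext i j
    have h := orthonormal_iff_ite.1 horth i j
    rw [PiLp.inner_apply] at h
    simp only [RCLike.inner_apply] at h
    rw [Matrix.mul_apply, Matrix.one_apply]
    calc ∑ k, Aᴴ i k * A k j = ∑ k, star (krylovGS M m i k) * krylovGS M m j k := by
          refine Finset.sum_congr rfl fun k _ => ?_
          rw [Matrix.conjTranspose_apply, hA, hA]
          rfl
      _ = if i = j then 1 else 0 := by simpa [mul_comm] using h
  -- span of columns of A equals K
  have hfinM : Submodule.span ℂ
      (Set.range fun j : Fin m => (M ^ (j : ℕ)).mulVec (Pi.single 0 1)) = K := by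
    have hr2 : (fun j : Fin m => (M ^ (j : ℕ)).mulVec (Pi.single 0 1 : Fin (n + 1) → ℂ))
        = (⇑eg ∘ fun j : Fin m => (D ^ (j : ℕ)).mulVec c) := by
      funext j
      simp only [Function.comp]
      rw [hegapp, hKry]
    rw [hr2, Set.range_comp, ← LinearEquiv.coe_coe, ← Submodule.map_span, hfin m hVcm, ← hKmap]
  have hspan1 : Submodule.span ℂ (Set.range (krylovGS M m))
      = Submodule.span ℂ (Set.range F) := by
    unfold krylovGS
    rw [@InnerProductSpace.span_gramSchmidtNormed_range ℂ (EuclideanSpace ℂ (Fin (n + 1))) _ _ _ (Fin m) _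
      (inferInstance : LocallyFiniteOrderBot (Fin m))
      (inferInstance : WellFoundedLT (Fin m)) F,
      @InnerProductSpace.span_gramSchmidt ℂ (EuclideanSpace ℂ (Fin (n + 1))) _ _ _ (Fin m) _
      (inferInstance : LocallyFiniteOrderBot (Fin m))
      (inferInstance : WellFoundedLT (Fin m)) F]
  have hcolspan : Submodule.span ℂ (Set.range fun j : Fin m => (fun i => A i j)) = K := by
    have h1 : (fun j : Fin m => (fun i => A i j)) = ⇑ew ∘ krylovGS M m := by
      funext j
      funext i
      rw [hA]
      rfl
    have h2 : ⇑ew ∘ F = fun j : Fin m =>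
        (M ^ (j : ℕ)).mulVec (Pi.single 0 1 : Fin (n + 1) → ℂ) := rfl
    rw [h1, Set.range_comp, ← LinearEquiv.coe_coe, ← Submodule.map_span, hspan1, Submodule.map_span,
      ← Set.range_comp, LinearEquiv.coe_coe, h2, hfinM]
  -- basic facts about K and A
  have hMK : ∀ w ∈ K, M.mulVec w ∈ K := by
    intro w hw
    refine Submodule.span_induction ?_ ?_ ?_ ?_ hw
    · rintro x ⟨j, rfl⟩
      have : M.mulVec ((M ^ j).mulVec (Pi.single 0 1)) =
          (M ^ (j + 1)).mulVec (Pi.single 0 1) := by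
        rw [Matrix.mulVec_mulVec, ← pow_succ']
      rw [this]
      exact Submodule.subset_span ⟨j + 1, rfl⟩
    · rw [Matrix.mulVec_zero]; exact Submodule.zero_mem _
    · intro a b _ _ ha hb
      rw [Matrix.mulVec_add]; exact Submodule.add_mem _ ha hb
    · intro r a _ ha
      rw [Matrix.mulVec_smul]; exact Submodule.smul_mem _ _ ha
  have hsumK : ∀ x : Fin m → ℂ, A.mulVec x ∈ K := by
    intro x
    have hx : A.mulVec x = ∑ j, x j • (fun i => A i j) := by
      funext i
      rw [Finset.sum_apply]
      simp only [Matrix.mulVec, dotProduct, Pi.smul_apply, smul_eq_mul]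
      exact Finset.sum_congr rfl fun j _ => mul_comm _ _
    rw [hx]
    exact Submodule.sum_mem _ fun j _ => Submodule.smul_mem _ _
      (hcolspan ▸ Submodule.subset_span ⟨j, rfl⟩)
  have hrange : ∀ w ∈ K, ∃ y, A.mulVec y = w := by
    intro w hw
    have hle : K ≤ LinearMap.range A.mulVecLin := by
      rw [← hcolspan]
      refine Submodule.span_le.2 ?_
      rintro x ⟨j, rfl⟩
      refine ⟨Pi.single j 1, ?_⟩
      rw [Matrix.mulVecLin_apply, Matrix.mulVec_single]
      funext i
      simp
    obtain ⟨y, hy⟩ := hle hw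
    exact ⟨y, hy⟩
  have hproj : ∀ w ∈ K, A.mulVec (Aᴴ.mulVec w) = w := by
    intro w hw
    obtain ⟨y, rfl⟩ := hrange w hw
    rw [Matrix.mulVec_mulVec, Matrix.mulVec_mulVec, Matrix.mul_assoc, hAtA, Matrix.mul_one]
  have hAinj : ∀ x : Fin m → ℂ, A.mulVec x = 0 → x = 0 := by
    intro x hx
    have h := congrArg (Aᴴ.mulVec ·) hx
    simp only [Matrix.mulVec_mulVec, Matrix.mulVec_zero] at h
    rwa [hAtA, Matrix.one_mulVec] at h
  -- support property of W
  have hWsupp : W ≤ suppSubmodule c := by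
    rw [hW]
    refine Submodule.span_le.2 ?_
    rintro x ⟨l, rfl⟩
    intro i hic
    show (if (ν i : ℂ) = ↑l then c i else 0) = 0
    rw [hic, ite_self]
  have hginj : Function.Injective g.mulVec := g.mulVec_injective_of_invertible
  -- the spectrum equality
  have hspeceq : spectrum ℂ (Aᴴ * M * A)
      = {x : ℂ | ∃ i : Fin (n + 1), g 0 i ≠ 0 ∧ x = (ν i : ℂ)} := by
    ext x
    constructor
    · intro hx
      obtain ⟨v, hv0, hTv⟩ := (spec_iff_eig _ x).1 hx
      set w : Fin (n + 1) → ℂ := A.mulVec v with hwdef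
      have hwK : w ∈ K := hsumK v
      have hMAv : Aᴴ.mulVec (M.mulVec w) = x • v := by
        rw [hwdef, Matrix.mulVec_mulVec, Matrix.mulVec_mulVec, hTv]
      have hMw : M.mulVec w = x • w := by
        have h1 : M.mulVec w ∈ K := hMK w hwK
        have h2 := hproj _ h1
        rw [hMAv] at h2
        rw [← h2, Matrix.mulVec_smul]
      have hw0 : w ≠ 0 := fun h => hv0 (hAinj v h)
      rw [hKmap] at hwK
      obtain ⟨u, huKD, huw⟩ := hwK
      have huW : u ∈ W := hKDWeq ▸ huKD
      have husupp := hWsupp huW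
      have hgw : g.mulVec u = w := by rw [← hegapp u]; exact huw
      have hu0 : u ≠ 0 := by
        intro h
        rw [h, Matrix.mulVec_zero] at hgw
        exact hw0 hgw.symm
      have hDu : D.mulVec u = x • u := by
        apply hginj
        have h3 : M.mulVec (g.mulVec u) = g.mulVec (D.mulVec u) := by
          rw [hspec, Matrix.mulVec_mulVec,
            Matrix.mul_assoc (g * D) g⁻¹ g, hg'g, Matrix.mul_one, ← Matrix.mulVec_mulVec]
        rw [← h3, hgw, hMw, ← hgw, Matrix.mulVec_smul]
      obtain ⟨i, hui⟩ := Function.ne_iff.1 hu0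
      have hcoord := congrFun hDu i
      rw [hD, Matrix.mulVec_diagonal] at hcoord
      have hxν : x = (ν i : ℂ) := by
        have := hcoord.symm
        rw [Pi.smul_apply, smul_eq_mul] at this
        exact mul_right_cancel₀ hui this
      have hgi : g 0 i ≠ 0 := by
        intro h
        exact hui (husupp i ((hci i).2 h))
      exact ⟨i, hgi, hxν⟩
    · rintro ⟨i, hgi, rfl⟩
      have hciz : c i ≠ 0 := fun h => hgi ((hci i).1 h)
      have hlmem : (ν i : ℂ) ∈ Vc := hmemVc i hciz
      set u : Fin (n + 1) → ℂ := wv ((ν i : ℂ)) with hudef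
      have huW : u ∈ W := Submodule.subset_span ⟨⟨_, hlmem⟩, rfl⟩
      have huKD : u ∈ KD := hKDWeq ▸ huW
      set w : Fin (n + 1) → ℂ := g.mulVec u with hwdef
      have hwK : w ∈ K := by
        rw [hKmap]
        exact ⟨u, huKD, (hegapp u)⟩
      have hui : u i = c i := by
        show (if (ν i : ℂ) = (ν i : ℂ) then c i else 0) = c i
        rw [if_pos rfl]
      have hu0 : u ≠ 0 := fun h => hciz (by rw [← hui, h]; rfl)
      have hw0 : w ≠ 0 := by
        intro h
        apply hu0
        apply hginj
        rw [← hwdef, h, Matrix.mulVec_zero]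
      have hDu : D.mulVec u = (ν i : ℂ) • u := by
        funext k
        rw [hD, Matrix.mulVec_diagonal, Pi.smul_apply, smul_eq_mul]
        show (ν k : ℂ) * (if (ν k : ℂ) = (ν i : ℂ) then c k else 0)
          = (ν i : ℂ) * (if (ν k : ℂ) = (ν i : ℂ) then c k else 0)
        by_cases h : (ν k : ℂ) = (ν i : ℂ)
        · rw [if_pos h, h]
        · rw [if_neg h, mul_zero, mul_zero]
      have hMw : M.mulVec w = (ν i : ℂ) • w := by
        rw [hwdef, hspec, Matrix.mulVec_mulVec,
          Matrix.mul_assoc (g * D) g⁻¹ g, hg'g, Matrix.mul_one, ← Matrix.mulVec_mulVec,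
          hDu, Matrix.mulVec_smul]
      obtain ⟨v, hvdef⟩ : ∃ v : Fin m → ℂ, v = Aᴴ.mulVec w := ⟨_, rfl⟩
      have hAv : A.mulVec v = w := by rw [hvdef]; exact hproj w hwK
      have hv0 : v ≠ 0 := by
        intro h
        rw [h, Matrix.mulVec_zero] at hAv
        exact hw0 hAv.symm
      refine (spec_iff_eig _ _).2 ⟨v, hv0, ?_⟩
      calc (Aᴴ * M * A).mulVec v = Aᴴ.mulVec (M.mulVec (A.mulVec v)) := by
            rw [Matrix.mulVec_mulVec, Matrix.mulVec_mulVec]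
        _ = Aᴴ.mulVec ((ν i : ℂ) • w) := by rw [hAv, hMw]
        _ = (ν i : ℂ) • v := by rw [Matrix.mulVec_smul, ← hvdef]
  refine ⟨hspeceq, ?_⟩
  have hSVc : {x : ℂ | ∃ i : Fin (n + 1), g 0 i ≠ 0 ∧ x = (ν i : ℂ)} = (↑Vc : Set ℂ) := by
    ext x
    simp only [Set.mem_setOf_eq, hVc, Finset.coe_image, Set.mem_image, Finset.mem_coe,
      Finset.mem_filter, Finset.mem_univ, true_and]
    constructor
    · rintro ⟨i, hgi, rfl⟩
      exact ⟨i, hgi, rfl⟩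
    · rintro ⟨i, hgi, rfl⟩
      exact ⟨i, hgi, rfl⟩
  rw [hspeceq, hSVc, Set.ncard_coe_finset, ← hmVc]
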